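/- Let S be a type, P : S → S → ℝ a stochastic matrix, c : S → ℝ bounded, γ ∈ (0,1), and ν a sub-probability measure on the positive integers. Then the value function Q^π is a fixed point of the ν-Bellman operator: (T^ν Q^π)(x) = Q^π(x) for every x ∈ S. -/

import Mathlib

/-- `ξ^ν(k) = γ^(k−1) − ∑_{κ=0}^{k−1} γ^κ · ν(k−κ)`. -/
noncomputable def xiNu (γ : ℝ) (ν : ℕ → ℝ) (k : ℕ) : ℝ :=
  γ ^ (k - 1) - ∑ κ ∈ Finset.range k, γ ^ κ * ν (k - κ)

/-- A sub-probability measure on the positive integers. -/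
def IsSubProbPNat (ν : ℕ → ℝ) : Prop :=
  ν 0 = 0 ∧ (∀ k, 0 ≤ ν k) ∧ Summable ν ∧ ∑' k, ν k ≤ 1

private lemma sum_range_eq_antidiagonal (γ : ℝ) (ν : ℕ → ℝ) (k : ℕ) :
    ∑ κ ∈ Finset.range (k + 1), γ ^ κ * ν (k + 1 - κ) =
      ∑ p ∈ Finset.HasAntidiagonal.antidiagonal k, ν (p.1 + 1) * γ ^ p.2 := by
  rw [Finset.Nat.sum_antidiagonal_eq_sum_range_succ (fun i j => ν (i + 1) * γ ^ j) k]
  rw [← Finset.sum_range_reflect (fun i => ν (i + 1) * γ ^ (k - i)) (k + 1)]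
  apply Finset.sum_congr rfl
  intro j hj
  rw [Finset.mem_range] at hj
  have e1 : k + 1 - 1 - j = k - j := by omega
  have e2 : k - j + 1 = k + 1 - j := by omega
  have e3 : k - (k - j) = j := by omega
  simp only [e1, e2, e3]
  ring

set_option maxHeartbeats 1600000 in
/-- The value function `Q^π` is a fixed point of the ν-Bellman operator. -/
theorem value_fixedPoint_nuBellman
    {S : Type*} [DecidableEq S] (P : S → S → ℝ)
    (hP_nonneg : ∀ x y, 0 ≤ P x y)
    (hP_summable : ∀ x, Summable (P x))
    (hP_sum : ∀ x, ∑' y, P x y = 1)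
    (Pk : ℕ → S → S → ℝ)
    (hPk_zero : ∀ x y, Pk 0 x y = if x = y then 1 else 0)
    (hPk_succ : ∀ k x y, Pk (k + 1) x y = ∑' z, P x z * Pk k z y)
    (c : S → ℝ) (hc : ∃ C, ∀ x, |c x| ≤ C)
    (γ : ℝ) (hγ : γ ∈ Set.Ioo (0 : ℝ) 1)
    (ν : ℕ → ℝ) (hν : IsSubProbPNat ν)
    (Qpi : S → ℝ)
    (hQpi : ∀ x, Qpi x = ∑' k : ℕ, γ ^ k * ∑' y, Pk k x y * c y)
    (T : (S → ℝ) → S → ℝ)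
    (hT : ∀ Q x, T Q x = c x + γ * ∑' k : ℕ,
      (xiNu γ ν (k + 1) * ∑' y, Pk (k + 1) x y * c y
        + ν (k + 1) * ∑' y, Pk (k + 1) x y * Q y)) :
    ∀ x, T Qpi x = Qpi x := by
  obtain ⟨hν0, hνnn, hνsum, hνle⟩ := hν
  obtain ⟨hγ0, hγ1⟩ := hγ
  obtain ⟨C₀, hC₀⟩ := hc
  set C : ℝ := max C₀ 0 with hCdef
  have hC0 : (0 : ℝ) ≤ C := le_max_right _ _
  have hcC : ∀ y, |c y| ≤ C := fun y => (hC₀ y).trans (le_max_left _ _)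
  have hgeo : Summable (fun j : ℕ => γ ^ j) := summable_geometric_of_lt_one hγ0.le hγ1
  -- nonnegativity of Pk
  have hPk_nn : ∀ k x y, 0 ≤ Pk k x y := by
    intro k
    induction k with
    | zero => intro x y; rw [hPk_zero]; split <;> norm_num
    | succ k ih =>
      intro x y; rw [hPk_succ]
      exact tsum_nonneg fun z => mul_nonneg (hP_nonneg x z) (ih z y)
  -- summability and total mass of Pk
  have hPk : ∀ k x, Summable (Pk k x) ∧ ∑' y, Pk k x y = 1 := by
    intro k
    induction k with
    | zero =>
      intro x
      have h0 : Pk 0 x = fun y => if y = x then (1 : ℝ) else 0 := by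
        funext y; rw [hPk_zero]
        by_cases h : x = y
        · simp [h]
        · simp [h, Ne.symm h]
      rw [h0]
      exact ⟨(hasSum_ite_eq x 1).summable, (hasSum_ite_eq x 1).tsum_eq⟩
    | succ k ih =>
      intro x
      have hG : Summable (fun p : S × S => P x p.1 * Pk k p.1 p.2) := by
        apply (summable_prod_of_nonneg
          (fun p => mul_nonneg (hP_nonneg x p.1) (hPk_nn k p.1 p.2))).2
        constructor
        · intro z; exact ((ih z).1).mul_left (P x z)
        · have : (fun z => ∑' y, P x z * Pk k z y) = fun z => P x z := by
            funext z; rw [tsum_mul_left, (ih z).2, mul_one]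
          rw [this]; exact hP_summable x
      have hsumm : Summable (Pk (k + 1) x) := by
        refine Summable.congr (hG.prod_symm.prod) fun y => ?_
        exact (hPk_succ k x y).symm
      refine ⟨hsumm, ?_⟩
      calc ∑' y, Pk (k + 1) x y = ∑' y, ∑' z, P x z * Pk k z y :=
            tsum_congr fun y => hPk_succ k x y
        _ = ∑' z, ∑' y, P x z * Pk k z y := Summable.tsum_comm hG
        _ = ∑' z, P x z * ∑' y, Pk k z y := tsum_congr fun z => tsum_mul_left
        _ = ∑' z, P x z := by
            apply tsum_congr; intro z; rw [(ih z).2, mul_one]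
        _ = 1 := hP_sum x
  -- summing a bounded function against the kernel
  have hker : ∀ (k : ℕ) (x : S) (f : S → ℝ) (B : ℝ), (∀ y, |f y| ≤ B) →
      Summable (fun y => Pk k x y * f y) ∧ |∑' y, Pk k x y * f y| ≤ B := by
    intro k x f B hf
    have habs : Summable (fun y => |Pk k x y * f y|) := by
      refine Summable.of_nonneg_of_le (fun y => abs_nonneg _) (fun y => ?_)
        (((hPk k x).1).mul_right B)
      rw [abs_mul, abs_of_nonneg (hPk_nn k x y)]
      exact mul_le_mul_of_nonneg_left (hf y) (hPk_nn k x y)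
    refine ⟨habs.of_abs, ?_⟩
    calc |∑' y, Pk k x y * f y| ≤ ∑' y, |Pk k x y * f y| := by
          have h1 := norm_tsum_le_tsum_norm (f := fun y => Pk k x y * f y) habs
          simp only [Real.norm_eq_abs] at h1
          exact h1
      _ ≤ ∑' y, Pk k x y * B := by
          refine Summable.tsum_le_tsum (fun y => ?_) habs (((hPk k x).1).mul_right B)
          rw [abs_mul, abs_of_nonneg (hPk_nn k x y)]
          exact mul_le_mul_of_nonneg_left (hf y) (hPk_nn k x y)
      _ = B := by rw [tsum_mul_right, (hPk k x).2, one_mul]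
  -- one-step Chapman–Kolmogorov for bounded observables
  have hstep : ∀ (k : ℕ) (x : S) (f : S → ℝ) (B : ℝ), (∀ y, |f y| ≤ B) →
      ∑' y, Pk (k + 1) x y * f y = ∑' z, P x z * ∑' y, Pk k z y * f y := by
    intro k x f B hf
    have hG : Summable (fun p : S × S => P x p.1 * Pk k p.1 p.2) := by
      apply (summable_prod_of_nonneg
        (fun p => mul_nonneg (hP_nonneg x p.1) (hPk_nn k p.1 p.2))).2
      constructor
      · intro z; exact ((hPk k z).1).mul_left (P x z)
      · have : (fun z => ∑' y, P x z * Pk k z y) = fun z => P x z := by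
          funext z; rw [tsum_mul_left, (hPk k z).2, mul_one]
        rw [this]; exact hP_summable x
    have hF : Summable (fun p : S × S => P x p.1 * Pk k p.1 p.2 * f p.2) := by
      apply Summable.of_abs
      refine Summable.of_nonneg_of_le (fun p => abs_nonneg _) (fun p => ?_) (hG.mul_right B)
      rw [abs_mul, abs_of_nonneg (mul_nonneg (hP_nonneg x p.1) (hPk_nn k p.1 p.2))]
      exact mul_le_mul_of_nonneg_left (hf p.2)
        (mul_nonneg (hP_nonneg x p.1) (hPk_nn k p.1 p.2))
    calc ∑' y, Pk (k + 1) x y * f y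
        = ∑' y, ∑' z, P x z * Pk k z y * f y := by
          apply tsum_congr; intro y
          rw [hPk_succ k x y, ← tsum_mul_right]
      _ = ∑' z, ∑' y, P x z * Pk k z y * f y := Summable.tsum_comm hF
      _ = ∑' z, P x z * ∑' y, Pk k z y * f y := by
          apply tsum_congr; intro z
          rw [← tsum_mul_left]
          apply tsum_congr; intro y; ring
  -- the moments m k x
  set m : ℕ → S → ℝ := fun k x => ∑' y, Pk k x y * c y with hm_def
  have hm' : ∀ k x, (∑' y, Pk k x y * c y) = m k x := fun k x => rfl
  have hmb : ∀ k x, |m k x| ≤ C := fun k x => (hker k x c C hcC).2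
  have hmstep : ∀ k x, m (k + 1) x = ∑' z, P x z * m k z := fun k x => hstep k x c C hcC
  have hPkm : ∀ (a b : ℕ) (x : S), ∑' y, Pk a x y * m b y = m (a + b) x := by
    intro a
    induction a with
    | zero =>
      intro b x
      rw [Nat.zero_add]
      rw [show (∑' y, Pk 0 x y * m b y) = Pk 0 x x * m b x from
        tsum_eq_single x fun y hy => by
          show Pk 0 x y * m b y = 0
          rw [hPk_zero, if_neg (Ne.symm hy), zero_mul]]
      rw [hPk_zero, if_pos rfl, one_mul]
    | succ a ih =>
      intro b x
      rw [hstep a x (m b) C (hmb b)]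
      have h1 : ∑' z, P x z * ∑' y, Pk a z y * m b y = ∑' z, P x z * m (a + b) z :=
        tsum_congr fun z => by rw [ih b z]
      rw [h1, ← hmstep (a + b) x]
      congr 1
      omega
  -- Qpi in terms of m
  have hQm : ∀ y, Qpi y = ∑' k, γ ^ k * m k y := fun y => hQpi y
  have hQsum : ∀ y, Summable (fun k => γ ^ k * m k y) := by
    intro y
    apply Summable.of_abs
    refine Summable.of_nonneg_of_le (fun k => abs_nonneg _) (fun k => ?_) (hgeo.mul_right C)
    rw [abs_mul, abs_pow, abs_of_nonneg hγ0.le]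
    exact mul_le_mul_of_nonneg_left (hmb k y) (pow_nonneg hγ0.le k)
  have hQb : ∀ y, |Qpi y| ≤ (1 - γ)⁻¹ * C := by
    intro y
    rw [hQm y]
    calc |∑' k, γ ^ k * m k y| ≤ ∑' k, |γ ^ k * m k y| := by
          have h1 := norm_tsum_le_tsum_norm (f := fun k => γ ^ k * m k y) (hQsum y).abs
          simp only [Real.norm_eq_abs] at h1
          exact h1
      _ ≤ ∑' k, γ ^ k * C := by
          refine Summable.tsum_le_tsum (fun k => ?_) (hQsum y).abs (hgeo.mul_right C)
          rw [abs_mul, abs_pow, abs_of_nonneg hγ0.le]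
          exact mul_le_mul_of_nonneg_left (hmb k y) (pow_nonneg hγ0.le k)
      _ = (1 - γ)⁻¹ * C := by
          rw [tsum_mul_right, tsum_geometric_of_lt_one hγ0.le hγ1, mul_comm]
  -- kernel applied to Qpi
  have hPkQ : ∀ (k : ℕ) (x : S),
      ∑' y, Pk (k + 1) x y * Qpi y = ∑' j, γ ^ j * m (k + 1 + j) x := by
    intro k x
    have hW : Summable (fun p : S × ℕ => Pk (k + 1) x p.1 * (γ ^ p.2 * C)) := by
      apply (summable_prod_of_nonneg
        (fun p => mul_nonneg (hPk_nn (k + 1) x p.1)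
          (mul_nonneg (pow_nonneg hγ0.le p.2) hC0))).2
      constructor
      · intro y
        show Summable fun j : ℕ => Pk (k + 1) x y * (γ ^ j * C)
        exact (hgeo.mul_right C).mul_left _
      · have : (fun y => ∑' j : ℕ, Pk (k + 1) x y * (γ ^ j * C))
            = fun y => Pk (k + 1) x y * ((1 - γ)⁻¹ * C) := by
          funext y
          rw [tsum_mul_left, tsum_mul_right, tsum_geometric_of_lt_one hγ0.le hγ1]
        rw [this]
        exact ((hPk (k + 1) x).1).mul_right _
    have hFp : Summable (fun p : S × ℕ => Pk (k + 1) x p.1 * (γ ^ p.2 * m p.2 p.1)) := by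
      apply Summable.of_abs
      refine Summable.of_nonneg_of_le (fun p => abs_nonneg _) (fun p => ?_) hW
      rw [abs_mul, abs_of_nonneg (hPk_nn (k + 1) x p.1), abs_mul, abs_pow,
        abs_of_nonneg hγ0.le]
      exact mul_le_mul_of_nonneg_left
        (mul_le_mul_of_nonneg_left (hmb p.2 p.1) (pow_nonneg hγ0.le p.2))
        (hPk_nn (k + 1) x p.1)
    calc ∑' y, Pk (k + 1) x y * Qpi y
        = ∑' y, ∑' j, Pk (k + 1) x y * (γ ^ j * m j y) := by
          apply tsum_congr; intro y
          rw [hQm y, tsum_mul_left]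
      _ = ∑' j, ∑' y, Pk (k + 1) x y * (γ ^ j * m j y) :=
          (Summable.tsum_comm (f := fun y j => Pk (k + 1) x y * (γ ^ j * m j y)) hFp).symm
      _ = ∑' j, γ ^ j * m (k + 1 + j) x := by
          apply tsum_congr; intro j
          have : (fun y => Pk (k + 1) x y * (γ ^ j * m j y))
              = fun y => γ ^ j * (Pk (k + 1) x y * m j y) := by
            funext y; ring
          rw [this, tsum_mul_left, hPkm (k + 1) j x]
  -- main computation
  intro x
  have hνs : Summable (fun k => ν (k + 1)) := (summable_nat_add_iff 1).2 hνsum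
  set F : ℕ × ℕ → ℝ := fun p => ν (p.1 + 1) * (γ ^ p.2 * m (p.1 + 1 + p.2) x) with hF_def
  have hF : Summable F := by
    apply Summable.of_abs
    refine Summable.of_nonneg_of_le (fun p => abs_nonneg _) (fun p => ?_)
      (Summable.mul_of_nonneg (f := fun k => ν (k + 1) * C) (g := fun j : ℕ => γ ^ j)
        (hνs.mul_right C) hgeo (fun k => mul_nonneg (hνnn _) hC0)
        (fun j => pow_nonneg hγ0.le j))
    simp only [hF_def]
    rw [abs_mul, abs_of_nonneg (hνnn _), abs_mul, abs_pow, abs_of_nonneg hγ0.le]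
    calc ν (p.1 + 1) * (γ ^ p.2 * |m (p.1 + 1 + p.2) x|)
        ≤ ν (p.1 + 1) * (γ ^ p.2 * C) := by
          exact mul_le_mul_of_nonneg_left
            (mul_le_mul_of_nonneg_left (hmb _ x) (pow_nonneg hγ0.le _)) (hνnn _)
      _ = ν (p.1 + 1) * C * γ ^ p.2 := by ring
  set D : ℕ → ℝ := fun n =>
    (∑ p ∈ Finset.HasAntidiagonal.antidiagonal n, ν (p.1 + 1) * γ ^ p.2) * m (n + 1) x with hD_def
  have hD_eq : ∀ n : ℕ, (∑' p : (Finset.HasAntidiagonal.antidiagonal n : Finset (ℕ × ℕ)), F p) = D n := by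
    intro n
    rw [Finset.tsum_subtype (Finset.HasAntidiagonal.antidiagonal n) F]
    simp only [hD_def]
    rw [Finset.sum_mul]
    apply Finset.sum_congr rfl
    intro p hp
    rw [Finset.HasAntidiagonal.mem_antidiagonal] at hp
    simp only [hF_def]
    rw [show p.1 + 1 + p.2 = n + 1 by omega]
    ring
  have hFe : Summable (F ∘ Finset.HasAntidiagonal.sigmaAntidiagonalEquivProd) :=
    (Equiv.summable_iff _).2 hF
  have hD : Summable D := by
    refine Summable.congr hFe.sigma fun n => ?_
    exact hD_eq n
  have htsumF : ∑' p : ℕ × ℕ, F p = ∑' n, D n := by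
    rw [← Equiv.tsum_eq Finset.HasAntidiagonal.sigmaAntidiagonalEquivProd F,
      Summable.tsum_sigma (f := fun σ : (Σ n : ℕ, (Finset.HasAntidiagonal.antidiagonal n : Finset (ℕ × ℕ))) =>
        F (Finset.HasAntidiagonal.sigmaAntidiagonalEquivProd σ)) hFe]
    exact tsum_congr fun n => hD_eq n
  have hB_eq : ∀ k : ℕ, ν (k + 1) * ∑' j, γ ^ j * m (k + 1 + j) x = ∑' j, F (k, j) := by
    intro k
    rw [← tsum_mul_left]
  have hB : Summable (fun k => ν (k + 1) * ∑' j, γ ^ j * m (k + 1 + j) x) := by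
    refine Summable.congr hF.prod fun k => ?_
    exact (hB_eq k).symm
  have htsumB : ∑' k, ν (k + 1) * ∑' j, γ ^ j * m (k + 1 + j) x = ∑' n, D n := by
    rw [tsum_congr hB_eq, ← Summable.tsum_prod hF, htsumF]
  -- the xi part
  have hxi : ∀ k : ℕ, xiNu γ ν (k + 1) * m (k + 1) x + D k = γ ^ k * m (k + 1) x := by
    intro k
    have : xiNu γ ν (k + 1)
        = γ ^ k - ∑ p ∈ Finset.HasAntidiagonal.antidiagonal k, ν (p.1 + 1) * γ ^ p.2 := by
      rw [xiNu, Nat.add_sub_cancel, ← sum_range_eq_antidiagonal]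
    rw [this, hD_def]
    ring
  have hA' : Summable (fun k => γ ^ k * m (k + 1) x) := by
    apply Summable.of_abs
    refine Summable.of_nonneg_of_le (fun k => abs_nonneg _) (fun k => ?_) (hgeo.mul_right C)
    rw [abs_mul, abs_pow, abs_of_nonneg hγ0.le]
    exact mul_le_mul_of_nonneg_left (hmb _ x) (pow_nonneg hγ0.le k)
  have hA : Summable (fun k => xiNu γ ν (k + 1) * m (k + 1) x) := by
    refine Summable.congr (hA'.sub hD) fun k => ?_
    have := hxi k
    linarith [hxi k]
  -- assemble
  rw [hT Qpi x, hQm x]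
  have step1 : ∑' k : ℕ, (xiNu γ ν (k + 1) * ∑' y, Pk (k + 1) x y * c y
      + ν (k + 1) * ∑' y, Pk (k + 1) x y * Qpi y)
      = ∑' k : ℕ, (xiNu γ ν (k + 1) * m (k + 1) x
        + ν (k + 1) * ∑' j, γ ^ j * m (k + 1 + j) x) := by
    apply tsum_congr; intro k
    rw [hPkQ k x, hm']
  rw [step1]
  rw [Summable.tsum_add hA hB, htsumB]
  have step2 : ∑' k, xiNu γ ν (k + 1) * m (k + 1) x + ∑' n, D n
      = ∑' k, γ ^ k * m (k + 1) x := by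
    rw [← Summable.tsum_add hA hD]
    exact tsum_congr hxi
  rw [step2]
  have step3 : c x + γ * ∑' k, γ ^ k * m (k + 1) x = ∑' k, γ ^ k * m k x := by
    rw [Summable.tsum_eq_zero_add (hQsum x)]
    have : ∑' k : ℕ, γ ^ (k + 1) * m (k + 1) x = γ * ∑' k, γ ^ k * m (k + 1) x := by
      rw [← tsum_mul_left]
      apply tsum_congr; intro k; ring
    rw [this, pow_zero, one_mul]
    have hm0 : m 0 x = c x := by
      rw [← hm', show (∑' y, Pk 0 x y * c y) = Pk 0 x x * c x from
        tsum_eq_single x fun y hy => by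
          show Pk 0 x y * c y = 0
          rw [hPk_zero, if_neg (Ne.symm hy), zero_mul]]
      rw [hPk_zero, if_pos rfl, one_mul]
    rw [hm0]
  exact step3
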